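/- Let X be a Fano variety of dimension n and G ⊂ Aut(X) a closed connected subgroup. If α_G(X) > n/(n+1) then δ_G(X) > 1, and if α_G(X) ≥ n/(n+1) then δ_G(X) ≥ 1. (Hence, via the valuative criterion, X is G-equivariantly uniformly K-stable, resp. K-semistable.) -/
import Mathlib


/-- Tian-type criterion: for a Fano variety `X` of dimension `n` with a closed
connected subgroup `G ⊂ Aut(X)`, let `V` be the (nonempty) set of `G`-invariant
divisorial valuations, `A` the log discrepancy, `T` and `S` the pseudoeffective
threshold and expected vanishing order for the anticanonical polarization, so
that `S v ≤ (n/(n+1))·T v` (Fujita's inequality, the only needed input).  With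
`α_G(X) = ⨅ A/T` and `δ_G(X) = ⨅ A/S`:
if `α_G(X) > n/(n+1)` then `δ_G(X) > 1`, and if `α_G(X) ≥ n/(n+1)` then
`δ_G(X) ≥ 1` (hence `X` is `G`-equivariantly uniformly K-stable, resp.
K-semistable, by the valuative criterion). -/
theorem alphaG_criterion {V : Type*} [Nonempty V] (n : ℕ) (hn : 0 < n)
    (A T S : V → ℝ)
    (hA : ∀ v, 0 < A v) (hT : ∀ v, 0 < T v) (hS : ∀ v, 0 < S v)
    (hFujita : ∀ v, S v ≤ ((n : ℝ) / (n + 1)) * T v) :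
    (((n : ℝ) / (n + 1) < ⨅ v, A v / T v) → 1 < ⨅ v, A v / S v) ∧
    (((n : ℝ) / (n + 1) ≤ ⨅ v, A v / T v) → 1 ≤ ⨅ v, A v / S v) := by
  have hn' : (0 : ℝ) < n := by exact_mod_cast hn
  set c : ℝ := (n : ℝ) / (n + 1) with hcdef
  have hc : (0 : ℝ) < c := by positivity
  have hbdd : BddBelow (Set.range fun v => A v / T v) :=
    ⟨0, by rintro x ⟨v, rfl⟩; exact (div_pos (hA v) (hT v)).le⟩
  -- key pointwise: A v / S v ≥ (1/c) * (A v / T v)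
  have key : ∀ v, c⁻¹ * (A v / T v) ≤ A v / S v := by
    intro v
    have h1 : A v / (c * T v) ≤ A v / S v :=
      div_le_div_of_nonneg_left (hA v).le (hS v) (hFujita v)
    calc c⁻¹ * (A v / T v) = A v / (c * T v) := by
          field_simp
        _ ≤ A v / S v := h1
  -- hence δ ≥ (1/c) * α
  have hmain : c⁻¹ * (⨅ v, A v / T v) ≤ ⨅ v, A v / S v := by
    refine le_ciInf fun v => ?_
    exact le_trans (mul_le_mul_of_nonneg_left (ciInf_le hbdd v) (by positivity)) (key v)
  constructor
  · intro hα
    have : (1 : ℝ) < c⁻¹ * (⨅ v, A v / T v) := by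
      have := mul_lt_mul_of_pos_left hα (inv_pos.mpr hc)
      rwa [inv_mul_cancel₀ hc.ne'] at this
    linarith [hmain]
  · intro hα
    have : (1 : ℝ) ≤ c⁻¹ * (⨅ v, A v / T v) := by
      have := mul_le_mul_of_nonneg_left hα (inv_pos.mpr hc).le
      rwa [inv_mul_cancel₀ hc.ne'] at this
    linarith [hmain]
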